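/- arXiv:1702.01534 — 3 statements merged into one kernel-verified Lean document; each statement's English description precedes it below -/
import Mathlib

section
/- Let n ≥ 2 and let A = (A^k_{ij,l}) be as above (totally symmetric in i,j,k) with S^j_l = (1/n) ∑_i A^j_{ii,l}. Then ∑ (A^k_{ij,l})² ≥ (3n²/(n+2)) ∑ (S^j_l)², with equality if and only if A^k_{ij,l} = (n/(n+2))(S^k_l δ_{ij} + S^i_l δ_{jk} + S^j_l δ_{ik}) for all i,j,k,l. -/
open Finset

/-- Kronecker delta as a real number. -/
def kron {n : ℕ} (i j : Fin n) : ℝ := if i = j then 1 else 0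

set_option maxHeartbeats 1000000 in
theorem stmt_1 (n : ℕ) (hn : 2 ≤ n)
    (A : Fin n → Fin n → Fin n → Fin n → ℝ)
    (hsym1 : ∀ i j k l, A i j k l = A j i k l)
    (hsym2 : ∀ i j k l, A i j k l = A i k j l)
    (S : Fin n → Fin n → ℝ)
    (hS : ∀ j l, S j l = (1 / (n : ℝ)) * ∑ i, A i i j l) :
    (3 * (n : ℝ) ^ 2 / ((n : ℝ) + 2)) * (∑ j, ∑ l, (S j l) ^ 2)
      ≤ ∑ i, ∑ j, ∑ k, ∑ l, (A i j k l) ^ 2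
    ∧ ((∑ i, ∑ j, ∑ k, ∑ l, (A i j k l) ^ 2
          = (3 * (n : ℝ) ^ 2 / ((n : ℝ) + 2)) * (∑ j, ∑ l, (S j l) ^ 2))
        ↔ ∀ i j k l, A i j k l =
            ((n : ℝ) / ((n : ℝ) + 2)) *
              (S k l * kron i j + S i l * kron j k + S j l * kron i k)) := by
  have hnpos : (0:ℝ) < n := by
    have : (2:ℝ) ≤ n := by exact_mod_cast hn
    linarith
  have hn0 : (n : ℝ) ≠ 0 := ne_of_gt hnpos
  have hn2 : (n : ℝ) + 2 ≠ 0 := by positivity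
  set c : ℝ := (n : ℝ) / ((n : ℝ) + 2) with hc
  set T : Fin n → Fin n → Fin n → Fin n → ℝ :=
    fun i j k l => S k l * kron i j + S i l * kron j k + S j l * kron i k with hT
  set Q : ℝ := ∑ j, ∑ l, (S j l) ^ 2 with hQ
  have hSn : ∀ j l, (∑ i, A i i j l) = (n : ℝ) * S j l := by
    intro j l
    rw [hS]
    field_simp
  -- the three A·T contractions
  have t1 : ∑ i, ∑ j, ∑ k, ∑ l, A i j k l * (S k l * kron i j) = (n : ℝ) * Q := by
    have e1 : ∑ i, ∑ j, ∑ k, ∑ l, A i j k l * (S k l * kron i j)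
        = ∑ i, ∑ k, ∑ l, A i i k l * S k l := by
      simp [kron, mul_ite, ite_mul, mul_zero, zero_mul, mul_one, one_mul,
        Finset.sum_ite_irrel, Finset.sum_ite_eq, Finset.sum_ite_eq']
    rw [e1, Finset.sum_comm]
    rw [hQ, Finset.mul_sum]
    refine Finset.sum_congr rfl fun k _ => ?_
    rw [Finset.sum_comm, Finset.mul_sum]
    refine Finset.sum_congr rfl fun l _ => ?_
    rw [← Finset.sum_mul, hSn]
    ring
  have t2 : ∑ i, ∑ j, ∑ k, ∑ l, A i j k l * (S i l * kron j k) = (n : ℝ) * Q := by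
    have e1 : ∑ i, ∑ j, ∑ k, ∑ l, A i j k l * (S i l * kron j k)
        = ∑ i, ∑ j, ∑ l, A i j j l * S i l := by
      simp [kron, mul_ite, ite_mul, mul_zero, zero_mul, mul_one, one_mul,
        Finset.sum_ite_irrel, Finset.sum_ite_eq, Finset.sum_ite_eq']
    have e2 : ∑ i, ∑ j, ∑ l, A i j j l * S i l = ∑ i, ∑ l, ∑ j, A j j i l * S i l := by
      refine Finset.sum_congr rfl fun i _ => ?_
      rw [Finset.sum_comm]
      refine Finset.sum_congr rfl fun l _ => Finset.sum_congr rfl fun j _ => ?_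
      rw [hsym1 i j j l, hsym2 j i j l]
    rw [e1, e2, hQ, Finset.mul_sum]
    refine Finset.sum_congr rfl fun i _ => ?_
    rw [Finset.mul_sum]
    refine Finset.sum_congr rfl fun l _ => ?_
    rw [← Finset.sum_mul, hSn]
    ring
  have t3 : ∑ i, ∑ j, ∑ k, ∑ l, A i j k l * (S j l * kron i k) = (n : ℝ) * Q := by
    have e1 : ∑ i, ∑ j, ∑ k, ∑ l, A i j k l * (S j l * kron i k)
        = ∑ i, ∑ j, ∑ l, A i j i l * S j l := by
      simp [kron, mul_ite, ite_mul, mul_zero, zero_mul, mul_one, one_mul,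
        Finset.sum_ite_irrel, Finset.sum_ite_eq, Finset.sum_ite_eq']
    have e2 : ∑ i, ∑ j, ∑ l, A i j i l * S j l = ∑ j, ∑ l, ∑ i, A i i j l * S j l := by
      rw [Finset.sum_comm]
      refine Finset.sum_congr rfl fun j _ => ?_
      rw [Finset.sum_comm]
      refine Finset.sum_congr rfl fun l _ => Finset.sum_congr rfl fun i _ => ?_
      rw [hsym2 i j i l]
    rw [e1, e2, hQ, Finset.mul_sum]
    refine Finset.sum_congr rfl fun j _ => ?_
    rw [Finset.mul_sum]
    refine Finset.sum_congr rfl fun l _ => ?_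
    rw [← Finset.sum_mul, hSn]
    ring
  have hAT : ∑ i, ∑ j, ∑ k, ∑ l, A i j k l * T i j k l = 3 * (n : ℝ) * Q := by
    have e : ∀ i j k l : Fin n, A i j k l * T i j k l
        = A i j k l * (S k l * kron i j) + A i j k l * (S i l * kron j k)
          + A i j k l * (S j l * kron i k) := by
      intro i j k l; simp only [hT]; ring
    simp_rw [e, Finset.sum_add_distrib]
    rw [t1, t2, t3]; ring
  have hTT : ∑ i, ∑ j, ∑ k, ∑ l, T i j k l * T i j k l = 3 * ((n : ℝ) + 2) * Q := by
    have e : ∑ i, ∑ j, ∑ k, ∑ l, T i j k l * T i j k l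
        = ∑ i : Fin n, ∑ j : Fin n, ∑ k : Fin n, ∑ l : Fin n,
            ((S k l * S k l) * (kron i j * kron i j)
            + (S i l * S i l) * (kron j k * kron j k)
            + (S j l * S j l) * (kron i k * kron i k)
            + 2 * ((S k l * S i l) * (kron i j * kron j k))
            + 2 * ((S k l * S j l) * (kron i j * kron i k))
            + 2 * ((S i l * S j l) * (kron j k * kron i k))) := by
      refine Finset.sum_congr rfl fun i _ => Finset.sum_congr rfl fun j _ =>
        Finset.sum_congr rfl fun k _ => Finset.sum_congr rfl fun l _ => ?_
      simp only [hT]; ring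
    rw [e]
    simp only [Finset.sum_add_distrib]
    have k1 : ∑ i : Fin n, ∑ j : Fin n, ∑ k : Fin n, ∑ l : Fin n,
        (S k l * S k l) * (kron i j * kron i j) = (n : ℝ) * ∑ j, ∑ l, (S j l) ^ 2 := by
      simp [kron, mul_ite, ite_mul, mul_zero, zero_mul, mul_one, one_mul,
        Finset.sum_ite_irrel, Finset.sum_ite_eq, Finset.sum_ite_eq', sq,
        Finset.mul_sum, card_univ]
    have k2 : ∑ i : Fin n, ∑ j : Fin n, ∑ k : Fin n, ∑ l : Fin n,
        (S i l * S i l) * (kron j k * kron j k) = (n : ℝ) * ∑ j, ∑ l, (S j l) ^ 2 := by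
      simp [kron, mul_ite, ite_mul, mul_zero, zero_mul, mul_one, one_mul,
        Finset.sum_ite_irrel, Finset.sum_ite_eq, Finset.sum_ite_eq', sq,
        Finset.mul_sum, card_univ]
    have k3 : ∑ i : Fin n, ∑ j : Fin n, ∑ k : Fin n, ∑ l : Fin n,
        (S j l * S j l) * (kron i k * kron i k) = (n : ℝ) * ∑ j, ∑ l, (S j l) ^ 2 := by
      simp [kron, mul_ite, ite_mul, mul_zero, zero_mul, mul_one, one_mul,
        Finset.sum_ite_irrel, Finset.sum_ite_eq, Finset.sum_ite_eq', sq,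
        Finset.mul_sum, card_univ]
    have k4 : ∑ i : Fin n, ∑ j : Fin n, ∑ k : Fin n, ∑ l : Fin n,
        2 * ((S k l * S i l) * (kron i j * kron j k)) = 2 * ∑ j, ∑ l, (S j l) ^ 2 := by
      simp [kron, mul_ite, ite_mul, mul_zero, zero_mul, mul_one, one_mul,
        Finset.sum_ite_irrel, Finset.sum_ite_eq, Finset.sum_ite_eq', sq,
        Finset.mul_sum]
    have k5 : ∑ i : Fin n, ∑ j : Fin n, ∑ k : Fin n, ∑ l : Fin n,
        2 * ((S k l * S j l) * (kron i j * kron i k)) = 2 * ∑ j, ∑ l, (S j l) ^ 2 := by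
      simp [kron, mul_ite, ite_mul, mul_zero, zero_mul, mul_one, one_mul,
        Finset.sum_ite_irrel, Finset.sum_ite_eq, Finset.sum_ite_eq', sq,
        Finset.mul_sum]
    have k6 : ∑ i : Fin n, ∑ j : Fin n, ∑ k : Fin n, ∑ l : Fin n,
        2 * ((S i l * S j l) * (kron j k * kron i k)) = 2 * ∑ j, ∑ l, (S j l) ^ 2 := by
      simp [kron, mul_ite, ite_mul, mul_zero, zero_mul, mul_one, one_mul,
        Finset.sum_ite_irrel, Finset.sum_ite_eq, Finset.sum_ite_eq', sq,
        Finset.mul_sum]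
    rw [k1, k2, k3, k4, k5, k6, hQ]
    ring
  have key : ∑ i, ∑ j, ∑ k, ∑ l, (A i j k l - c * T i j k l) ^ 2
      = (∑ i, ∑ j, ∑ k, ∑ l, (A i j k l) ^ 2) - (3 * (n : ℝ) ^ 2 / ((n : ℝ) + 2)) * Q := by
    have split : (∑ i, ∑ j, ∑ k, ∑ l, (A i j k l) ^ 2)
          - (2 * c) * (∑ i, ∑ j, ∑ k, ∑ l, A i j k l * T i j k l)
          + c ^ 2 * (∑ i, ∑ j, ∑ k, ∑ l, T i j k l * T i j k l)
        = ∑ i, ∑ j, ∑ k, ∑ l, (A i j k l - c * T i j k l) ^ 2 := by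
      simp_rw [Finset.mul_sum, ← Finset.sum_sub_distrib, ← Finset.sum_add_distrib]
      refine Finset.sum_congr rfl fun i _ => Finset.sum_congr rfl fun j _ =>
        Finset.sum_congr rfl fun k _ => Finset.sum_congr rfl fun l _ => ?_
      ring
    rw [← split, hAT, hTT, hc]
    field_simp
    ring
  have hnonneg : 0 ≤ ∑ i, ∑ j, ∑ k, ∑ l, (A i j k l - c * T i j k l) ^ 2 :=
    Finset.sum_nonneg fun i _ => Finset.sum_nonneg fun j _ =>
      Finset.sum_nonneg fun k _ => Finset.sum_nonneg fun l _ => sq_nonneg _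
  constructor
  · linarith [key, hnonneg]
  · constructor
    · intro h
      have hz : ∑ i, ∑ j, ∑ k, ∑ l, (A i j k l - c * T i j k l) ^ 2 = 0 := by
        rw [key, h]; ring
      intro i j k l
      have h1 := (Finset.sum_eq_zero_iff_of_nonneg
        (fun x _ => Finset.sum_nonneg fun j _ => Finset.sum_nonneg fun k _ =>
          Finset.sum_nonneg fun l _ => sq_nonneg _)).mp hz i (mem_univ i)
      have h2 := (Finset.sum_eq_zero_iff_of_nonneg
        (fun x _ => Finset.sum_nonneg fun k _ =>
          Finset.sum_nonneg fun l _ => sq_nonneg _)).mp h1 j (mem_univ j)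
      have h3 := (Finset.sum_eq_zero_iff_of_nonneg
        (fun x _ => Finset.sum_nonneg fun l _ => sq_nonneg _)).mp h2 k (mem_univ k)
      have h4 := (Finset.sum_eq_zero_iff_of_nonneg
        (fun x _ => sq_nonneg _)).mp h3 l (mem_univ l)
      have h5 : A i j k l - c * T i j k l = 0 := sq_eq_zero_iff.mp h4
      have h6 : A i j k l = c * T i j k l := by linarith
      exact h6
    · intro h
      have hz : ∀ i j k l : Fin n, (A i j k l - c * T i j k l) ^ 2 = 0 := by
        intro i j k l
        simp only [hT]
        rw [h i j k l]
        ring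
      have hzz : ∑ i, ∑ j, ∑ k, ∑ l, (A i j k l - c * T i j k l) ^ 2 = 0 := by
        simp [hz]
      rw [hzz] at key
      linarith [key]
end

section
/- Let n ≥ 2, let T = (T^j_l) be a symmetric n×n real matrix, and suppose the array K^k_{ij,l} := (n/(n+2))(T^k_l δ_{ij} + T^i_l δ_{jk} + T^j_l δ_{ik}) is also symmetric in the indices k and l (i.e., K^k_{ij,l} = K^l_{ij,k} for all i,j,k,l). Then there exists μ ∈ ℝ, namely μ = (1/(n+2)) ∑_l T^l_l, such that K^k_{ij,l} = μ(δ_{kl} δ_{ij} + δ_{il} δ_{jk} + δ_{jl} δ_{ik}) for all i,j,k,l. -/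
open Finset

theorem stmt_3 (n : ℕ) (hn : 2 ≤ n)
    (T : Fin n → Fin n → ℝ)
    (hsym : ∀ j l, T j l = T l j)
    (K : Fin n → Fin n → Fin n → Fin n → ℝ)
    (hK : ∀ i j k l, K i j k l =
        ((n : ℝ) / ((n : ℝ) + 2)) *
          (T k l * kron i j + T i l * kron j k + T j l * kron i k))
    (hkl : ∀ i j k l, K i j k l = K i j l k) :
    ∃ μ : ℝ, μ = (1 / ((n : ℝ) + 2)) * (∑ l, T l l) ∧
      ∀ i j k l, K i j k l =
        μ * (kron k l * kron i j + kron i l * kron j k + kron j l * kron i k) := by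
  have hnpos : (0:ℝ) < (n:ℝ) := by
    have : (2:ℝ) ≤ (n:ℝ) := by exact_mod_cast hn
    linarith
  have ha : ((n : ℝ) / ((n : ℝ) + 2)) ≠ 0 := by positivity
  have key : ∀ i j k l, T k l * kron i j + T i l * kron j k + T j l * kron i k
      = T l k * kron i j + T i k * kron j l + T j k * kron i l := by
    intro i j k l
    have h1 := hkl i j k l
    rw [hK i j k l, hK i j l k] at h1
    exact mul_left_cancel₀ ha h1
  have hoff : ∀ k l : Fin n, k ≠ l → T k l = 0 := by
    intro k l hne
    have h := key k k k l
    have hs := hsym l k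
    simp [kron, hne, Ne.symm hne] at h
    linarith
  have hdiag : ∀ k l : Fin n, k ≠ l → T k k = T l l := by
    intro k l hne
    have h := key k l k l
    simp [kron, hne, Ne.symm hne] at h
    linarith
  have hz : (0:ℕ) < n := by omega
  set z : Fin n := ⟨0, hz⟩ with hzdef
  set c : ℝ := T z z with hc
  have hdiagall : ∀ k : Fin n, T k k = c := by
    intro k
    by_cases hk : k = z
    · rw [hk]
    · exact hdiag k z hk
  have hT : ∀ k l : Fin n, T k l = c * kron k l := by
    intro k l
    by_cases hk : k = l
    · subst hk; simp [kron, hdiagall k]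
    · simp [kron, hk, hoff k l hk]
  have hsum : (∑ l, T l l) = (n:ℝ) * c := by
    simp [hdiagall, mul_comm]
  refine ⟨((n : ℝ) / ((n : ℝ) + 2)) * c, ?_, ?_⟩
  · rw [hsum]; field_simp
  · intro i j k l
    rw [hK, hT k l, hT i l, hT j l]
    ring
end

section
/- Let ε = ±1 and let f, g : ℝ → ℝ be differentiable functions with f' = 3μ and g' = μ for a constant μ ∈ ℝ, and suppose (2g(s) − f(s))(g(s)² − f(s)g(s) + ε) = 0 for all s ∈ ℝ. Then μ = 0. -/
lemma lin_of_hasDerivAt (u : ℝ → ℝ) (c : ℝ) (hu : ∀ s, HasDerivAt u c s) :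
    ∀ s, u s = u 0 + c * s := by
  intro s
  have h : ∀ x, HasDerivAt (fun t => u t - c * t) 0 x := by
    intro x
    have := (hu x).sub ((hasDerivAt_id x).const_mul c)
    rw [mul_one, sub_self] at this
    exact this
  have hconst : ∀ x y : ℝ, (fun t => u t - c * t) x = (fun t => u t - c * t) y := by
    intro x y
    exact is_const_of_deriv_eq_zero (fun t => (h t).differentiableAt)
      (fun t => (h t).deriv) x y
  have := hconst s 0
  simp only at this
  linarith

theorem stmt_7 (ε : ℝ) (hε : ε = 1 ∨ ε = -1) (μ : ℝ)
    (f g : ℝ → ℝ)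
    (hf : ∀ s, HasDerivAt f (3 * μ) s)
    (hg : ∀ s, HasDerivAt g μ s)
    (hvan : ∀ s, (2 * g s - f s) * ((g s) ^ 2 - f s * g s + ε) = 0) :
    μ = 0 := by
  have hF := lin_of_hasDerivAt f (3 * μ) hf
  have hG := lin_of_hasDerivAt g μ hg
  have P : ∀ s : ℝ, (2 * (g 0 + μ * s) - (f 0 + 3 * μ * s)) *
      ((g 0 + μ * s) ^ 2 - (f 0 + 3 * μ * s) * (g 0 + μ * s) + ε) = 0 := by
    intro s
    have := hvan s
    rw [hF s, hG s] at this
    linarith [this]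
  have h0 := P 0
  have h1 := P 1
  have h2 := P 2
  have h3 := P 3
  have hcube : μ ^ 3 = 0 := by nlinarith [h0, h1, h2, h3]
  exact pow_eq_zero_iff (by norm_num) |>.mp hcube
end
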